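/- Let A, A' ∈ SL(2,ℂ) and f, f' : ℂ → ℝ. For (u,ζ) ∈ ℝ×ℂ with c_A·ζ + d_A ≠ 0, define γ_{(A,f)}(u,ζ) := (K_A(ζ)·(u + f(ζ)), A·ζ). If moreover c_{A'}·(A·ζ) + d_{A'} ≠ 0, then also c_{A'A}·ζ + d_{A'A} ≠ 0 and γ_{(A',f')}(γ_{(A,f)}(u,ζ)) = γ_{(A'A, g)}(u,ζ), where g(ζ) := f(ζ) + K_{A⁻¹}(A·ζ)·f'(A·ζ). This is the BMS semidirect-product composition law (Λ',f') ⊙ (Λ,f) = (Λ'Λ, f + (K_{Λ⁻¹}∘Λ)·(f'∘Λ)). -/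

import Mathlib

open Matrix

noncomputable section

/-- `SL(2,ℂ)`. -/
abbrev SL2C := Matrix.SpecialLinearGroup (Fin 2) ℂ

/-- `P_A(ζ) = |aζ+b|² + |cζ+d|²`. -/
def Pfac (A : SL2C) (ζ : ℂ) : ℝ :=
  ‖(A : Matrix (Fin 2) (Fin 2) ℂ) 0 0 * ζ + (A : Matrix (Fin 2) (Fin 2) ℂ) 0 1‖ ^ 2 +
  ‖(A : Matrix (Fin 2) (Fin 2) ℂ) 1 0 * ζ + (A : Matrix (Fin 2) (Fin 2) ℂ) 1 1‖ ^ 2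

/-- The BMS conformal factor `K_A(ζ) = (1+|ζ|²)/P_A(ζ)`. -/
def Kfac (A : SL2C) (ζ : ℂ) : ℝ := (1 + ‖ζ‖ ^ 2) / Pfac A ζ

/-- The Möbius action `A·ζ = (aζ+b)/(cζ+d)`. -/
def moeb (A : SL2C) (ζ : ℂ) : ℂ :=
  ((A : Matrix (Fin 2) (Fin 2) ℂ) 0 0 * ζ + (A : Matrix (Fin 2) (Fin 2) ℂ) 0 1) /
  ((A : Matrix (Fin 2) (Fin 2) ℂ) 1 0 * ζ + (A : Matrix (Fin 2) (Fin 2) ℂ) 1 1)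

/-- The BMS action on `ℝ × ℂ` in a Bondi frame:
`γ_{(A,f)}(u,ζ) = (K_A(ζ)·(u + f(ζ)), A·ζ)`. -/
def gammaBMS (A : SL2C) (f : ℂ → ℝ) : ℝ × ℂ → ℝ × ℂ :=
  fun p => (Kfac A p.2 * (p.1 + f p.2), moeb A p.2)

/-- The BMS semidirect-product composition law:
`γ_{(A',f')} ∘ γ_{(A,f)} = γ_{(A'A, f + (K_{A⁻¹}∘A)·(f'∘A))}` at regular points. -/
theorem gammaBMS_comp (A A' : SL2C) (f f' : ℂ → ℝ) (u : ℝ) (ζ : ℂ)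
    (h1 : (A : Matrix (Fin 2) (Fin 2) ℂ) 1 0 * ζ + (A : Matrix (Fin 2) (Fin 2) ℂ) 1 1 ≠ 0)
    (h2 : (A' : Matrix (Fin 2) (Fin 2) ℂ) 1 0 * moeb A ζ +
      (A' : Matrix (Fin 2) (Fin 2) ℂ) 1 1 ≠ 0) :
    ((A' * A : SL2C) : Matrix (Fin 2) (Fin 2) ℂ) 1 0 * ζ +
      ((A' * A : SL2C) : Matrix (Fin 2) (Fin 2) ℂ) 1 1 ≠ 0 ∧
    gammaBMS A' f' (gammaBMS A f (u, ζ)) =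
      gammaBMS (A' * A) (fun z => f z + Kfac A⁻¹ (moeb A z) * f' (moeb A z)) (u, ζ) := by

  set M := (A : Matrix (Fin 2) (Fin 2) ℂ) with hM
  set M' := (A' : Matrix (Fin 2) (Fin 2) ℂ) with hM'
  have hdet : M 0 0 * M 1 1 - M 0 1 * M 1 0 = 1 := by
    have := A.2; rwa [Matrix.det_fin_two] at this
  set w := moeb A ζ with hwdef
  have hw : w = (M 0 0 * ζ + M 0 1) / (M 1 0 * ζ + M 1 1) := rfl
  have hmul : ∀ i j, ((A' * A : SL2C) : Matrix (Fin 2) (Fin 2) ℂ) i j =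
      M' i 0 * M 0 j + M' i 1 * M 1 j := by
    intro i j
    rw [Matrix.SpecialLinearGroup.coe_mul, Matrix.mul_apply, Fin.sum_univ_two]
  have hbot : ((A' * A : SL2C) : Matrix (Fin 2) (Fin 2) ℂ) 1 0 * ζ +
      ((A' * A : SL2C) : Matrix (Fin 2) (Fin 2) ℂ) 1 1
      = (M' 1 0 * w + M' 1 1) * (M 1 0 * ζ + M 1 1) := by
    rw [hmul, hmul, hw]; field_simp; ring
  have htop : ((A' * A : SL2C) : Matrix (Fin 2) (Fin 2) ℂ) 0 0 * ζ +
      ((A' * A : SL2C) : Matrix (Fin 2) (Fin 2) ℂ) 0 1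
      = (M' 0 0 * w + M' 0 1) * (M 1 0 * ζ + M 1 1) := by
    rw [hmul, hmul, hw]; field_simp; ring
  have hne : ((A' * A : SL2C) : Matrix (Fin 2) (Fin 2) ℂ) 1 0 * ζ +
      ((A' * A : SL2C) : Matrix (Fin 2) (Fin 2) ℂ) 1 1 ≠ 0 := by
    rw [hbot]; exact mul_ne_zero h2 h1
  refine ⟨hne, ?_⟩
  -- abs facts
  have habs1' : (0:ℝ) < ‖M 1 0 * ζ + M 1 1‖ ^ 2 :=
    pow_pos (norm_pos_iff.mpr h1) 2
  have habs1 : ‖M 1 0 * ζ + M 1 1‖ ^ 2 ≠ 0 := ne_of_gt habs1'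
  have hPA : Pfac A ζ ≠ 0 := by
    have h0 : (0:ℝ) ≤ ‖M 0 0 * ζ + M 0 1‖ ^ 2 := sq_nonneg _
    unfold Pfac; rw [← hM]; nlinarith
  have hPA' : Pfac A' w ≠ 0 := by
    have h0 : (0:ℝ) ≤ ‖M' 0 0 * w + M' 0 1‖ ^ 2 := sq_nonneg _
    have h2' : (0:ℝ) < ‖M' 1 0 * w + M' 1 1‖ ^ 2 := pow_pos (norm_pos_iff.mpr h2) 2
    unfold Pfac; rw [← hM']; nlinarith
  have hzeta : (1 : ℝ) + ‖ζ‖ ^ 2 ≠ 0 := by positivity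
  -- 1 + |w|² = Pfac A ζ / |cζ+d|²
  have hwabs : 1 + ‖w‖ ^ 2 = Pfac A ζ / ‖M 1 0 * ζ + M 1 1‖ ^ 2 := by
    rw [hw, norm_div, div_pow, Pfac, ← hM]
    field_simp
    rw [mul_comm ζ, add_div, div_self habs1]; ring
  -- Pfac composition
  have hPcomp : Pfac (A' * A) ζ = Pfac A' w * ‖M 1 0 * ζ + M 1 1‖ ^ 2 := by
    unfold Pfac
    rw [htop, hbot, norm_mul, norm_mul]
    simp only [← hM, ← hM']
    ring
  -- K composition
  have hKcomp : Kfac (A' * A) ζ = Kfac A' w * Kfac A ζ := by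
    unfold Kfac
    rw [hPcomp, hwabs]
    field_simp
  -- inverse matrix entries
  have hinv : ((A⁻¹ : SL2C) : Matrix (Fin 2) (Fin 2) ℂ) =
      !![M 1 1, -M 0 1; -M 1 0, M 0 0] := by
    rw [Matrix.SpecialLinearGroup.coe_inv, Matrix.adjugate_fin_two]
  have hinv00 : ((A⁻¹ : SL2C) : Matrix (Fin 2) (Fin 2) ℂ) 0 0 = M 1 1 := by rw [hinv]; rfl
  have hinv01 : ((A⁻¹ : SL2C) : Matrix (Fin 2) (Fin 2) ℂ) 0 1 = -M 0 1 := by rw [hinv]; rfl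
  have hinv10 : ((A⁻¹ : SL2C) : Matrix (Fin 2) (Fin 2) ℂ) 1 0 = -M 1 0 := by rw [hinv]; rfl
  have hinv11 : ((A⁻¹ : SL2C) : Matrix (Fin 2) (Fin 2) ℂ) 1 1 = M 0 0 := by rw [hinv]; rfl
  have hinvtop : M 1 1 * w + -M 0 1 = ζ / (M 1 0 * ζ + M 1 1) := by
    rw [hw, mul_div_assoc', div_add' _ _ _ h1, div_left_inj' h1]; linear_combination ζ * hdet
  have hinvbot : -M 1 0 * w + M 0 0 = 1 / (M 1 0 * ζ + M 1 1) := by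
    rw [hw]; field_simp; linear_combination hdet
  have hPinv : Pfac A⁻¹ w = (‖ζ‖ ^ 2 + 1) / ‖M 1 0 * ζ + M 1 1‖ ^ 2 := by
    unfold Pfac
    rw [hinv00, hinv01, hinv10, hinv11, hinvtop, hinvbot, norm_div, norm_div]
    rw [div_pow, div_pow, norm_one]
    field_simp
  have hKinv : Kfac A⁻¹ w * Kfac A ζ = 1 := by
    unfold Kfac
    rw [hPinv, hwabs]
    have hz' : ‖ζ‖ ^ 2 + 1 ≠ 0 := by positivity
    field_simp
    ring
  -- conclude
  unfold gammaBMS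
  simp only [Prod.mk.injEq]
  constructor
  · rw [hKcomp]
    simp only [← hwdef]
    linear_combination (-(Kfac A' w * f' w)) * hKinv
  · show moeb A' w = moeb (A' * A) ζ
    unfold moeb
    rw [htop, hbot, mul_div_mul_right _ _ h1]
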